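/- For any events A_1, ..., A_K that are pairwise disjoint, any random variable Q taking values in [0,1], and thresholds 0 = α_0 < α_1 < ... < α_K, the sum Σ_{ℓ=1}^K Σ_{j=1}^{ℓ} (1/ℓ) P({Q ∈ (α_{j-1}, α_j]} ∩ A_ℓ) is at most Σ_{j=1}^K (1/j)·(P(Q ≤ α_j) - P(Q ≤ α_{j-1})). -/

import Mathlib

open MeasureTheory

/-- Key counting inequality in the proof of FDR control under dependence. -/
theorem stmt6 {Ω : Type*} [MeasurableSpace Ω] (μ : Measure Ω) [IsProbabilityMeasure μ]
    (K : ℕ) (A : ℕ → Set Ω) (hA : ∀ ℓ, MeasurableSet (A ℓ))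
    (hdisj : ∀ ℓ ℓ', ℓ ≠ ℓ' → Disjoint (A ℓ) (A ℓ'))
    (Q : Ω → ℝ) (hQ : Measurable Q) (hQr : ∀ ω, Q ω ∈ Set.Icc (0:ℝ) 1)
    (α : ℕ → ℝ) (hα0 : α 0 = 0) (hmono : StrictMonoOn α (Set.Icc 0 K)) :
    ∑ ℓ ∈ Finset.Icc 1 K, ∑ j ∈ Finset.Icc 1 ℓ,
        (1 / (ℓ:ℝ)) * (μ ({ω | Q ω ∈ Set.Ioc (α (j-1)) (α j)} ∩ A ℓ)).toReal
      ≤ ∑ j ∈ Finset.Icc 1 K,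
        (1 / (j:ℝ)) * ((μ {ω | Q ω ≤ α j}).toReal - (μ {ω | Q ω ≤ α (j-1)}).toReal) := by
  have hswap : ∑ ℓ ∈ Finset.Icc 1 K, ∑ j ∈ Finset.Icc 1 ℓ,
        (1 / (ℓ:ℝ)) * (μ ({ω | Q ω ∈ Set.Ioc (α (j-1)) (α j)} ∩ A ℓ)).toReal
      = ∑ j ∈ Finset.Icc 1 K, ∑ ℓ ∈ Finset.Icc j K,
        (1 / (ℓ:ℝ)) * (μ ({ω | Q ω ∈ Set.Ioc (α (j-1)) (α j)} ∩ A ℓ)).toReal := by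
    apply Finset.sum_comm'
    intro ℓ j
    simp only [Finset.mem_Icc]
    omega
  rw [hswap]
  apply Finset.sum_le_sum
  intro j hj
  rw [Finset.mem_Icc] at hj
  obtain ⟨hj1, hjK⟩ := hj
  set S : Set Ω := {ω | Q ω ∈ Set.Ioc (α (j-1)) (α j)} with hS
  have hSmeas : MeasurableSet S := hQ measurableSet_Ioc
  have hαlt : α (j-1) < α j :=
    hmono ⟨Nat.zero_le _, by omega⟩ ⟨Nat.zero_le _, by omega⟩ (by omega)
  -- measure of strip
  have hsplit : {ω | Q ω ≤ α j} = {ω | Q ω ≤ α (j-1)} ∪ S := by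
    ext ω
    simp only [Set.mem_setOf_eq, Set.mem_union, hS, Set.mem_Ioc]
    constructor
    · intro h
      rcases le_or_gt (Q ω) (α (j-1)) with h' | h'
      · exact Or.inl h'
      · exact Or.inr ⟨h', h⟩
    · rintro (h | ⟨_, h⟩)
      · exact h.trans hαlt.le
      · exact h
  have hdisjS : Disjoint {ω | Q ω ≤ α (j-1)} S := by
    rw [Set.disjoint_left]
    intro ω h1 h2
    simp only [Set.mem_setOf_eq] at h1
    simp only [hS, Set.mem_setOf_eq, Set.mem_Ioc] at h2
    exact absurd h1 (not_le.mpr h2.1)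
  have hadd : μ {ω | Q ω ≤ α j} = μ {ω | Q ω ≤ α (j-1)} + μ S := by
    rw [hsplit, measure_union hdisjS hSmeas]
  have hSval : (μ S).toReal
      = (μ {ω | Q ω ≤ α j}).toReal - (μ {ω | Q ω ≤ α (j-1)}).toReal := by
    rw [hadd, ENNReal.toReal_add (measure_ne_top μ _) (measure_ne_top μ _)]
    ring
  rw [← hSval]
  have hjpos : (0:ℝ) < j := by exact_mod_cast hj1
  -- bound each 1/ℓ by 1/j
  have step1 : ∑ ℓ ∈ Finset.Icc j K, (1 / (ℓ:ℝ)) * (μ (S ∩ A ℓ)).toReal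
      ≤ (1 / (j:ℝ)) * ∑ ℓ ∈ Finset.Icc j K, (μ (S ∩ A ℓ)).toReal := by
    rw [Finset.mul_sum]
    apply Finset.sum_le_sum
    intro ℓ hℓ
    rw [Finset.mem_Icc] at hℓ
    have hℓpos : (0:ℝ) < ℓ := by
      have : 1 ≤ ℓ := by omega
      exact_mod_cast Nat.lt_of_lt_of_le Nat.zero_lt_one this
    have h1 : (1 / (ℓ:ℝ)) ≤ 1 / (j:ℝ) := by
      apply one_div_le_one_div_of_le hjpos
      exact_mod_cast hℓ.1
    exact mul_le_mul_of_nonneg_right h1 ENNReal.toReal_nonneg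
  refine step1.trans ?_
  apply mul_le_mul_of_nonneg_left _ (by positivity)
  -- sum of disjoint pieces ≤ measure of S
  have hsum : ∑ ℓ ∈ Finset.Icc j K, μ (S ∩ A ℓ) = μ (⋃ ℓ ∈ Finset.Icc j K, S ∩ A ℓ) := by
    rw [measure_biUnion_finset]
    · intro a _ b _ hab
      exact Set.disjoint_left.mpr fun ω hωa hωb =>
        Set.disjoint_left.mp (hdisj a b hab) hωa.2 hωb.2
    · exact fun ℓ _ => hSmeas.inter (hA ℓ)
  have hle : μ (⋃ ℓ ∈ Finset.Icc j K, S ∩ A ℓ) ≤ μ S :=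
    measure_mono (Set.iUnion₂_subset fun ℓ _ => Set.inter_subset_left)
  calc ∑ ℓ ∈ Finset.Icc j K, (μ (S ∩ A ℓ)).toReal
      = (∑ ℓ ∈ Finset.Icc j K, μ (S ∩ A ℓ)).toReal := by
        rw [ENNReal.toReal_sum fun ℓ _ => measure_ne_top μ _]
    _ ≤ (μ S).toReal := by
        rw [hsum]
        exact ENNReal.toReal_mono (measure_ne_top μ _) hle
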